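/- (Cramér's decomposition theorem, as used) Let μ and ε be independent real random variables with ε ~ N(0,1) and Y = μ + ε. If Y is Gaussian, then μ is Gaussian (possibly degenerate, i.e., a point mass). -/

import Mathlib

open MeasureTheory ProbabilityTheory Complex Real Filter Topology

noncomputable def cf (ρ : Measure ℝ) (t : ℝ) : ℂ := ∫ x, Complex.exp (t * x * Complex.I) ∂ρ

lemma integral_gaussianReal {E : Type*} [NormedAddCommGroup E] [NormedSpace ℝ E]
    (m : ℝ) {v : NNReal} (hv : v ≠ 0) (g : ℝ → E) :
    ∫ x, g x ∂(gaussianReal m v) = ∫ x, gaussianPDFReal m v x • g x := by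
  rw [gaussianReal_of_var_ne_zero _ hv, gaussianPDF_def]
  have : ∀ x, ENNReal.ofReal (gaussianPDFReal m v x)
      = ((gaussianPDFReal m v x).toNNReal : ENNReal) := fun _ => rfl
  simp_rw [this]
  rw [integral_withDensity_eq_integral_smul ((measurable_gaussianPDFReal m v).real_toNNReal) g]
  congr 1; ext x
  rw [NNReal.smul_def, Real.coe_toNNReal _ (gaussianPDFReal_nonneg m v x)]

lemma sqrt_cpow (v : ℝ) (hv : 0 < v) : ((v:ℝ):ℂ) ^ (1/2 : ℂ) = (Real.sqrt v : ℂ) := by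
  rw [show (1/2 : ℂ) = ((1/2 : ℝ) : ℂ) by norm_num,
    ← Complex.ofReal_cpow hv.le, Real.rpow_def_of_pos hv,
    Real.sqrt_eq_rpow, Real.rpow_def_of_pos hv]

lemma cf_gaussianReal (m : ℝ) (v : NNReal) (t : ℝ) :
    cf (gaussianReal m v) t = Complex.exp (t * m * Complex.I - v * t^2 / 2) := by
  rcases eq_or_ne v 0 with rfl | hv
  · simp [cf, gaussianReal_zero_var, integral_dirac]
  · have hv' : (0:ℝ) < v := lt_of_le_of_ne v.2 (by exact_mod_cast Ne.symm hv)
    have hvC : ((v:ℝ):ℂ) ≠ 0 := by exact_mod_cast hv'.ne'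
    rw [cf, integral_gaussianReal m hv]
    have key : ∀ x : ℝ, gaussianPDFReal m v x • Complex.exp (t * x * Complex.I)
        = (Real.sqrt (2*π*v) : ℂ)⁻¹ *
          Complex.exp ((-(1/(2*(v:ℝ)))) * x ^ 2 + ((m/v : ℝ) + t * Complex.I) * x
            + (-(m^2/(2*v)) : ℝ)) := by
      intro x
      rw [gaussianPDFReal, real_smul]
      push_cast
      rw [mul_assoc]
      congr 1
      rw [← Complex.exp_add]
      congr 1
      field_simp
      ring
    simp_rw [key]
    rw [integral_const_mul, integral_cexp_quadratic (by simp; positivity)]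
    have h1 : ((π:ℂ) / -(-(1/(2*((v:ℝ):ℂ))))) = ((2*π*(v:ℝ) : ℝ) : ℂ) := by
      push_cast; field_simp
    rw [h1, sqrt_cpow _ (by positivity), inv_mul_cancel_left₀ (by
      simp only [ne_eq, Complex.ofReal_eq_zero]
      positivity)]
    congr 1
    have hI : (Complex.I)^2 = -1 := Complex.I_sq
    field_simp
    ring_nf
    rw [hI]
    push_cast
    field_simp
    ring

lemma H_eq (ρ : Measure ℝ) [IsProbabilityMeasure ρ] {σ : ℝ} (hσ : 0 < σ) (m : ℝ) :
    ((∫ x, gaussianPDFReal x (⟨σ^2, sq_nonneg σ⟩ : NNReal) m ∂ρ : ℝ) : ℂ)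
      = (2*π)⁻¹ * ∫ t : ℝ, Complex.exp (-(σ^2/2) * t^2 + t * m * Complex.I) * cf ρ (-t) := by
  have hb : ((-(σ^2/2) : ℝ) : ℂ).re < 0 := by
    simp only [Complex.ofReal_re]
    norm_num
    positivity
  have hcont : Continuous fun p : ℝ × ℝ =>
      Complex.exp (-(σ^2/2) * p.1^2 + p.1 * (m - p.2) * Complex.I) := by fun_prop
  have hnorm : ∀ t x : ℝ,
      ‖Complex.exp (-(σ^2/2) * (t:ℂ)^2 + t * ((m:ℂ) - x) * Complex.I)‖
        = rexp (-(σ^2/2) * t^2) := by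
    intro t x
    have hre : (-(↑σ^2/2) * (t:ℂ)^2 + ↑t*((m:ℂ) - ↑x)*Complex.I)
        = ((-(σ^2/2)*t^2 : ℝ) : ℂ) + ((t*(m-x) : ℝ):ℂ)*Complex.I := by push_cast; ring
    rw [hre, Complex.norm_exp]
    congr 1
    simp only [Complex.add_re, Complex.mul_re, Complex.ofReal_re, Complex.ofReal_im,
      Complex.I_re, Complex.I_im, mul_zero, zero_mul, mul_one, sub_zero, zero_sub,
      add_zero, neg_zero]
  have hint : Integrable (fun p : ℝ × ℝ =>
      Complex.exp (-(σ^2/2) * p.1^2 + p.1 * (m - p.2) * Complex.I))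
      ((volume : Measure ℝ).prod ρ) := by
    rw [integrable_prod_iff hcont.aestronglyMeasurable]
    refine ⟨Filter.Eventually.of_forall fun t => ?_, ?_⟩
    · apply (integrable_const (rexp (-(σ^2/2) * t^2))).mono'
        (Continuous.aestronglyMeasurable (by fun_prop))
      filter_upwards with x
      rw [hnorm]
    · simp_rw [hnorm]
      simp only [integral_const, measure_univ, probReal_univ, ENNReal.toReal_one, smul_eq_mul, one_mul]
      exact (integrable_cexp_quadratic (b := ((σ^2/2 : ℝ) : ℂ))
          (by simp only [Complex.ofReal_re]; exact half_pos (pow_pos hσ 2)) 0 0).norm.congr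
        (by filter_upwards with t
            have hre : (-((σ^2/2 : ℝ):ℂ) * (t:ℂ)^2 + 0*(t:ℂ) + 0)
                = ((-(σ^2/2)*t^2 : ℝ) : ℂ) + ((0:ℝ):ℂ)*Complex.I := by push_cast; ring
            rw [hre, Complex.norm_exp]
            congr 1
            simp only [Complex.add_re, Complex.mul_re, Complex.ofReal_re, Complex.ofReal_im,
              Complex.I_re, Complex.I_im, mul_zero, zero_mul, mul_one, sub_zero, zero_sub,
              add_zero, neg_zero])
  have step1 : ∫ t : ℝ, Complex.exp (-(σ^2/2) * t^2 + t * m * Complex.I) * cf ρ (-t)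
      = ∫ t : ℝ, ∫ x, Complex.exp (-(σ^2/2) * t^2 + t * (m - x) * Complex.I) ∂ρ := by
    congr 1; ext t
    rw [cf, ← integral_const_mul]
    congr 1; ext x
    rw [← Complex.exp_add]
    congr 1
    push_cast
    ring
  rw [step1, integral_integral_swap hint]
  have inner : ∀ x : ℝ, (∫ t : ℝ, Complex.exp (-(σ^2/2) * (t:ℂ)^2 + t * ((m:ℂ) - x) * Complex.I))
      = ((2*π : ℝ) : ℂ) * ((gaussianPDFReal x (⟨σ^2, sq_nonneg σ⟩ : NNReal) m : ℝ) : ℂ) := by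
    intro x
    have h2 : ∀ t : ℝ, Complex.exp (-(σ^2/2) * (t:ℂ)^2 + t * ((m:ℂ) - x) * Complex.I)
        = Complex.exp (((-(σ^2/2) : ℝ) : ℂ) * t^2 + (((m - x) : ℝ) * Complex.I) * t + 0) := by
      intro t; congr 1; push_cast; ring
    simp_rw [h2]
    rw [integral_cexp_quadratic hb]
    have h1 : ((π:ℂ) / -((-(σ^2/2) : ℝ) : ℂ)) = ((2*π/σ^2 : ℝ) : ℂ) := by
      have : (σ:ℂ) ≠ 0 := by exact_mod_cast hσ.ne'
      push_cast; field_simp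
    rw [h1, sqrt_cpow _ (by positivity)]
    have hexp : Complex.exp (0 - (((m - x) : ℝ) * Complex.I)^2 / (4 * ((-(σ^2/2) : ℝ) : ℂ)))
        = ((rexp (-(m - x)^2 / (2*σ^2)) : ℝ) : ℂ) := by
      rw [Complex.ofReal_exp]
      congr 1
      have : ((σ:ℂ))^2 ≠ 0 := by
        simpa using (pow_ne_zero 2 (by exact_mod_cast hσ.ne' : (σ:ℂ) ≠ 0))
      rw [mul_pow, Complex.I_sq]
      push_cast
      field_simp
      ring
    rw [hexp, ← Complex.ofReal_mul, ← Complex.ofReal_mul]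
    congr 1
    show _ = 2 * π * ((Real.sqrt (2*π*σ^2))⁻¹ * rexp (-(m - x)^2 / (2*σ^2)))
    have h2pi : (0:ℝ) < 2*π := by positivity
    have hs1 : Real.sqrt (2*π/σ^2) = Real.sqrt (2*π) / σ := by
      rw [Real.sqrt_div h2pi.le, Real.sqrt_sq hσ.le]
    have hs2 : Real.sqrt (2*π*σ^2) = Real.sqrt (2*π) * σ := by
      rw [Real.sqrt_mul h2pi.le, Real.sqrt_sq hσ.le]
    rw [hs1, hs2]
    have hsq : Real.sqrt (2*π) * Real.sqrt (2*π) = 2*π := Real.mul_self_sqrt h2pi.le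
    have hspos : (0:ℝ) < Real.sqrt (2*π) := Real.sqrt_pos.mpr h2pi
    set s := Real.sqrt (2*π) with hs
    rw [← hsq]
    field_simp
  simp_rw [inner]
  have hoR : ∫ (a : ℝ), ((gaussianPDFReal a (⟨σ^2, sq_nonneg σ⟩ : NNReal) m : ℝ) : ℂ) ∂ρ
      = ((∫ (a : ℝ), gaussianPDFReal a (⟨σ^2, sq_nonneg σ⟩ : NNReal) m ∂ρ : ℝ) : ℂ) :=
    integral_ofReal
  rw [integral_const_mul, ← mul_assoc, hoR]
  rw [← Complex.ofReal_mul, inv_mul_cancel₀ (by positivity : (2*π:ℝ) ≠ 0),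
    Complex.ofReal_one, one_mul]

lemma map_affine_gaussian (x σ : ℝ) :
    Measure.map (fun z => x + σ * z) (gaussianReal 0 1)
      = gaussianReal x (⟨σ^2, sq_nonneg σ⟩ : NNReal) := by
  have hcomp : (fun z : ℝ => x + σ * z) = (fun u : ℝ => x + u) ∘ (fun z : ℝ => σ * z) := rfl
  rw [hcomp, ← Measure.map_map (by fun_prop) (by fun_prop)]
  rw [show (fun z : ℝ => σ * z) = (σ * ·) from rfl, gaussianReal_map_const_mul,
    show (fun u : ℝ => x + u) = (x + ·) from rfl, gaussianReal_map_const_add]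
  norm_num
  rfl

lemma smooth_eq (g : ℝ → ℝ) (hg : Continuous g) (σ x : ℝ) :
    ∫ y, g y ∂(gaussianReal x (⟨σ^2, sq_nonneg σ⟩ : NNReal))
      = ∫ z, g (x + σ * z) ∂(gaussianReal 0 1) := by
  rw [← map_affine_gaussian x σ,
    integral_map (by fun_prop : Measurable fun z : ℝ => x + σ * z).aemeasurable
      hg.aestronglyMeasurable]

lemma tendsto_smooth (ρ : Measure ℝ) [IsProbabilityMeasure ρ] (g : ℝ → ℝ) (hg : Continuous g)
    (C : ℝ) (hC : ∀ y, |g y| ≤ C) :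
    Tendsto (fun n : ℕ =>
        ∫ x, (∫ y, g y ∂(gaussianReal x (⟨(1/(n+1) : ℝ)^2, sq_nonneg _⟩ : NNReal))) ∂ρ)
      atTop (𝓝 (∫ x, g x ∂ρ)) := by
  simp_rw [smooth_eq g hg]
  apply tendsto_integral_of_dominated_convergence (fun _ => C)
  · intro n
    have hc : Continuous fun p : ℝ × ℝ => g (p.1 + (1/(n+1) : ℝ) * p.2) := by fun_prop
    exact (hc.aestronglyMeasurable (μ := ρ.prod (gaussianReal 0 1))).integral_prod_right'
  · exact integrable_const C
  · intro n
    filter_upwards with x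
    calc ‖∫ z, g (x + (1/(n+1) : ℝ) * z) ∂(gaussianReal 0 1)‖
        ≤ C * ((gaussianReal 0 1) Set.univ).toReal :=
          norm_integral_le_of_norm_le_const (by
            filter_upwards with z
            rw [Real.norm_eq_abs]; exact hC _)
      _ = C := by simp
  · filter_upwards with x
    rw [show g x = ∫ _z : ℝ, g x ∂(gaussianReal 0 1) by simp]
    apply tendsto_integral_of_dominated_convergence (fun _ => C)
    · intro n; exact (hg.comp (by fun_prop)).aestronglyMeasurable
    · exact integrable_const C
    · intro n
      filter_upwards with z
      rw [Real.norm_eq_abs]; exact hC _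
    · filter_upwards with z
      have h0 : Tendsto (fun n : ℕ => (1/(n+1) : ℝ)) atTop (𝓝 0) :=
        tendsto_one_div_add_atTop_nhds_zero_nat
      have : Tendsto (fun n : ℕ => x + (1/(n+1) : ℝ) * z) atTop (𝓝 x) := by
        have := (h0.mul_const z).const_add x
        simpa using this
      exact (hg.continuousAt.tendsto).comp this

lemma swap_smooth (ρ : Measure ℝ) [IsProbabilityMeasure ρ] (g : ℝ → ℝ) (hg : Continuous g)
    (C : ℝ) (hC : ∀ y, |g y| ≤ C) {σ : ℝ} (hσ : 0 < σ) :
    ∫ x, (∫ y, g y ∂(gaussianReal x (⟨σ^2, sq_nonneg σ⟩ : NNReal))) ∂ρ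
      = ∫ m, g m * (∫ x, gaussianPDFReal x (⟨σ^2, sq_nonneg σ⟩ : NNReal) m ∂ρ) := by
  set v : NNReal := ⟨σ^2, sq_nonneg σ⟩ with hv
  have hv0 : v ≠ 0 := by
    rw [hv]
    intro h
    have := congrArg (fun q : NNReal => (q : ℝ)) h
    simp only [NNReal.coe_mk, NNReal.coe_zero] at this
    exact (pow_ne_zero 2 hσ.ne') this
  have hcontp : Continuous fun p : ℝ × ℝ => gaussianPDFReal p.1 v p.2 * g p.2 := by
    simp_rw [gaussianPDFReal]
    fun_prop
  have hCnn : 0 ≤ C := le_trans (abs_nonneg _) (hC 0)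
  have hsec : ∀ x : ℝ, Integrable (fun y => gaussianPDFReal x v y * g y) volume := by
    intro x
    exact ((integrable_gaussianPDFReal x v).bdd_mul hg.aestronglyMeasurable
        (c := C) (Filter.Eventually.of_forall fun y => by rw [Real.norm_eq_abs]; exact hC y)).congr
      (by filter_upwards with y; ring)
  have hint : Integrable (fun p : ℝ × ℝ => gaussianPDFReal p.1 v p.2 * g p.2)
      (ρ.prod (volume : Measure ℝ)) := by
    rw [integrable_prod_iff hcontp.aestronglyMeasurable]
    refine ⟨Filter.Eventually.of_forall fun x => hsec x, ?_⟩
    apply (integrable_const C).mono'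
      ((hcontp.aestronglyMeasurable (μ := ρ.prod (volume : Measure ℝ))).norm.integral_prod_right')
    filter_upwards with x
    have h1 : ∀ y, ‖gaussianPDFReal x v y * g y‖ ≤ gaussianPDFReal x v y * C := by
      intro y
      rw [norm_mul, Real.norm_eq_abs, Real.norm_eq_abs,
        _root_.abs_of_nonneg (gaussianPDFReal_nonneg x v y)]
      exact mul_le_mul_of_nonneg_left (hC y) (gaussianPDFReal_nonneg x v y)
    have h2 : (∫ y, ‖gaussianPDFReal x v y * g y‖) ≤ ∫ y, gaussianPDFReal x v y * C :=
      integral_mono (hsec x).norm ((integrable_gaussianPDFReal x v).mul_const C) h1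
    rw [Real.norm_eq_abs, _root_.abs_of_nonneg (integral_nonneg fun y => norm_nonneg _)]
    calc (∫ y, ‖gaussianPDFReal x v y * g y‖) ≤ ∫ y, gaussianPDFReal x v y * C := h2
      _ = (∫ y, gaussianPDFReal x v y) * C := by rw [integral_mul_const]
      _ = 1 * C := by rw [integral_gaussianPDFReal_eq_one x hv0]
      _ = C := one_mul C
  have inner : ∀ x : ℝ, (∫ y, g y ∂(gaussianReal x v)) = ∫ y, gaussianPDFReal x v y * g y := by
    intro x
    rw [integral_gaussianReal x hv0 g]
    simp [smul_eq_mul]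
  simp_rw [inner]
  rw [integral_integral_swap hint]
  congr 1; ext m
  rw [integral_mul_const, mul_comm]

lemma cf_norm_le_one (ρ : Measure ℝ) [IsProbabilityMeasure ρ] (t : ℝ) : ‖cf ρ t‖ ≤ 1 := by
  rw [cf]
  calc ‖∫ x, Complex.exp (t * x * Complex.I) ∂ρ‖
      ≤ 1 * (ρ Set.univ).toReal := norm_integral_le_of_norm_le_const (by
        filter_upwards with x
        rw [show (t:ℂ) * x * Complex.I = ((t*x : ℝ) : ℂ) * Complex.I by push_cast; ring,
          Complex.norm_exp_ofReal_mul_I])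
    _ = 1 := by simp

lemma cf_add_indep {Ω : Type*} [MeasurableSpace Ω] (P : Measure Ω) [IsProbabilityMeasure P]
    (X ε : Ω → ℝ) (hX : Measurable X) (hε : Measurable ε) (hindep : IndepFun X ε P) (t : ℝ) :
    cf (Measure.map (fun ω => X ω + ε ω) P) t
      = cf (Measure.map X P) t * cf (Measure.map ε P) t := by
  have hmap : Measure.map (fun ω => (X ω, ε ω)) P = (Measure.map X P).prod (Measure.map ε P) :=
    (indepFun_iff_map_prod_eq_prod_map_map hX.aemeasurable hε.aemeasurable).mp hindep
  have hcomp : Measure.map (fun ω => X ω + ε ω) P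
      = Measure.map (fun p : ℝ × ℝ => p.1 + p.2) (Measure.map (fun ω => (X ω, ε ω)) P) := by
    rw [Measure.map_map (by fun_prop) (hX.prodMk hε)]
    rfl
  rw [cf, hcomp, hmap,
    integral_map (by fun_prop : Measurable fun p : ℝ × ℝ => p.1 + p.2).aemeasurable
      (Continuous.aestronglyMeasurable (by fun_prop))]
  have hsplit : ∀ p : ℝ × ℝ, Complex.exp (↑t * ↑(p.1 + p.2) * Complex.I)
      = Complex.exp (t * p.1 * Complex.I) * Complex.exp (t * p.2 * Complex.I) := by
    intro p; rw [← Complex.exp_add]; push_cast; ring_nf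
  simp_rw [hsplit]
  exact integral_prod_mul (μ := Measure.map X P) (ν := Measure.map ε P)
    (fun x : ℝ => Complex.exp (t * x * Complex.I))
    (fun y : ℝ => Complex.exp (t * y * Complex.I))


lemma cf_inj {ρ₁ ρ₂ : Measure ℝ} [IsProbabilityMeasure ρ₁] [IsProbabilityMeasure ρ₂]
    (h : ∀ t, cf ρ₁ t = cf ρ₂ t) : ρ₁ = ρ₂ := by
  apply ext_of_forall_lintegral_eq_of_IsFiniteMeasure
  intro f
  set g : ℝ → ℝ := fun x => (f x : ℝ) with hgdef
  have hg : Continuous g := NNReal.continuous_coe.comp f.continuous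
  obtain ⟨Cb, hCb⟩ := f.bounded
  set C : ℝ := Cb + (f 0 : ℝ) with hCdef
  have hC : ∀ y, |g y| ≤ C := by
    intro y
    rw [_root_.abs_of_nonneg (f y).coe_nonneg]
    have h1 : dist (f y) (f 0) ≤ Cb := hCb y 0
    have h2 : ((f y : ℝ) - (f 0 : ℝ)) ≤ dist (f y) (f 0) := by
      rw [NNReal.dist_eq]
      exact le_abs_self _
    have := (f 0).coe_nonneg
    simp only [hCdef]
    linarith
  have hint : ∀ (ρ : Measure ℝ) [IsProbabilityMeasure ρ], Integrable g ρ := by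
    intro ρ _
    apply (integrable_const C).mono' hg.aestronglyMeasurable
    filter_upwards with x
    rw [Real.norm_eq_abs]
    exact hC x
  -- the H functions agree
  have hH : ∀ σ : ℝ, 0 < σ → ∀ m : ℝ,
      (∫ x, gaussianPDFReal x (⟨σ^2, sq_nonneg σ⟩ : NNReal) m ∂ρ₁)
        = ∫ x, gaussianPDFReal x (⟨σ^2, sq_nonneg σ⟩ : NNReal) m ∂ρ₂ := by
    intro σ hσ m
    have h1 := H_eq ρ₁ hσ m
    have h2 := H_eq ρ₂ hσ m
    have : ((∫ x, gaussianPDFReal x (⟨σ^2, sq_nonneg σ⟩ : NNReal) m ∂ρ₁ : ℝ) : ℂ)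
        = ((∫ x, gaussianPDFReal x (⟨σ^2, sq_nonneg σ⟩ : NNReal) m ∂ρ₂ : ℝ) : ℂ) := by
      rw [h1, h2]
      simp_rw [h]
    exact_mod_cast this
  have key : ∫ x, g x ∂ρ₁ = ∫ x, g x ∂ρ₂ := by
    have heach : ∀ n : ℕ,
        ∫ x, (∫ y, g y ∂(gaussianReal x (⟨(1/(n+1) : ℝ)^2, sq_nonneg _⟩ : NNReal))) ∂ρ₁
          = ∫ x, (∫ y, g y ∂(gaussianReal x (⟨(1/(n+1) : ℝ)^2, sq_nonneg _⟩ : NNReal))) ∂ρ₂ := by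
      intro n
      have hσ : (0:ℝ) < 1/(n+1) := by positivity
      rw [swap_smooth ρ₁ g hg C hC hσ, swap_smooth ρ₂ g hg C hC hσ]
      congr 1
      ext m
      rw [hH _ hσ m]
    exact tendsto_nhds_unique
      (tendsto_smooth ρ₁ g hg C hC)
      ((tendsto_smooth ρ₂ g hg C hC).congr (fun n => (heach n).symm))
  rw [lintegral_coe_eq_integral f (hint ρ₁), lintegral_coe_eq_integral f (hint ρ₂)]
  exact congrArg ENNReal.ofReal key

/-- (Cramér's decomposition, as used) If `μ` and `ε` are independent, `ε ~ N(0,1)`, and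
`Y = μ + ε` is Gaussian, then `μ` is Gaussian (possibly degenerate). -/
theorem cramer_decomposition
    {Ω : Type*} [MeasurableSpace Ω] (P : Measure Ω) [IsProbabilityMeasure P]
    (X ε : Ω → ℝ) (hX : Measurable X) (hε : Measurable ε)
    (hindep : IndepFun X ε P)
    (hεlaw : Measure.map ε P = gaussianReal 0 1)
    (hY : ∃ (a : ℝ) (v : NNReal), Measure.map (fun ω => X ω + ε ω) P = gaussianReal a v) :
    ∃ (b : ℝ) (w : NNReal), Measure.map X P = gaussianReal b w := by
  obtain ⟨a, v, hYlaw⟩ := hY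
  have hXprob : IsProbabilityMeasure (Measure.map X P) :=
    Measure.isProbabilityMeasure_map hX.aemeasurable
  have hgauss1 : ∀ t : ℝ, cf (gaussianReal 0 (1:NNReal)) t = Complex.exp (-(t:ℂ)^2/2) := by
    intro t
    rw [cf_gaussianReal]
    congr 1
    push_cast
    ring
  have hεne : ∀ t : ℝ, cf (gaussianReal 0 (1:NNReal)) t ≠ 0 := by
    intro t; rw [hgauss1]; exact Complex.exp_ne_zero _
  have hprod : ∀ t : ℝ, Complex.exp ((t:ℂ) * a * Complex.I - v * t^2/2)
      = cf (Measure.map X P) t * Complex.exp (-(t:ℂ)^2/2) := by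
    intro t
    rw [← hgauss1, ← cf_gaussianReal a v t, ← hYlaw, ← hεlaw,
      cf_add_indep P X ε hX hε hindep t, hεlaw]
  have hcfX : ∀ t : ℝ, cf (Measure.map X P) t
      = Complex.exp ((t:ℂ) * a * Complex.I - ((v:ℝ) - 1) * t^2/2) := by
    intro t
    have h0 : Complex.exp (-(t:ℂ)^2/2) ≠ 0 := Complex.exp_ne_zero _
    have h2 : cf (Measure.map X P) t
        = Complex.exp ((t:ℂ) * a * Complex.I - v * t^2/2) / Complex.exp (-(t:ℂ)^2/2) := by
      rw [eq_div_iff h0]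
      exact (hprod t).symm
    rw [h2, ← Complex.exp_sub]
    congr 1
    push_cast
    ring
  -- show v ≥ 1
  have hv1 : (1:ℝ) ≤ v := by
    by_contra hlt
    push_neg at hlt
    have hb := cf_norm_le_one (Measure.map X P) 1
    rw [hcfX 1, Complex.norm_exp] at hb
    have hb2 : rexp ((1 - (v:ℝ))/2) ≤ 1 := by
      refine le_trans (le_of_eq ?_) hb
      congr 1
      have hform : (((1:ℝ):ℂ) * ↑a * Complex.I - ((↑(v:ℝ) : ℂ) - 1) * ((1:ℝ):ℂ)^2/2)
          = (((1 - (v:ℝ))/2 : ℝ) : ℂ) + ((a : ℝ) : ℂ) * Complex.I := by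
        push_cast
        ring
      rw [hform]
      simp
    have := Real.exp_le_one_iff.mp hb2
    linarith
  set w : NNReal := ⟨(v:ℝ) - 1, by linarith⟩ with hw
  refine ⟨a, w, cf_inj fun t => ?_⟩
  have hwc : ((w : ℝ) : ℂ) = ((v:ℝ) : ℂ) - 1 := by
    rw [hw]
    show (((v:ℝ) - 1 : ℝ) : ℂ) = _
    push_cast [NNReal.coe_mk]
    ring
  rw [hcfX t, cf_gaussianReal a w t]
  congr 1
  rw [hwc]
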